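/- arXiv:1807.03422 — 2 statements merged into one kernel-verified Lean document; each statement's English description precedes it below -/
import Mathlib

section
/- Let X1, X2, Y1, Y2 be finite sets and P_{Y1,Y2|X1,X2} a channel. Assume: (i) for every distribution P on X1, I(P, P_{Y2|X1,X2}(·|·,x2)) does not depend on x2 ∈ X2; (ii) for every distribution Q on X2, I(Q, P_{Y1|X1,X2}(·|x1,·)) does not depend on x1 ∈ X1. Then there exist distributions P* on X1 and Q* on X2 such that for every joint input distribution P^{(1)} on X1 × X2, the product distribution P^{(2)} = P* ⊗ Q* satisfies I^{(1)}(X1; Y2 | X2) ≤ I^{(2)}(X1; Y2 | X2) and I^{(1)}(X2; Y1 | X1) ≤ I^{(2)}(X2; Y1 | X1). -/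
/-- A probability distribution on a finite set: nonnegative and sums to 1. -/
def IsProb {S : Type*} [Fintype S] (p : S → ℝ) : Prop :=
  (∀ s, 0 ≤ p s) ∧ ∑ s, p s = 1

/-- Input–output mutual information `I(P_X, P_{Y|X})` of a channel `W` under input `P`. -/
noncomputable def mutInf {X Y : Type*} [Fintype X] [Fintype Y]
    (P : X → ℝ) (W : X → Y → ℝ) : ℝ :=
  ∑ x, ∑ y, P x * W x y * Real.log (W x y / ∑ x', P x' * W x' y)

/-- Conditional distribution of the first coordinate given the second, for a joint
distribution `P` on `X1 × X2`; defined (arbitrarily) to be uniform when the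
conditioning event has zero probability. -/
noncomputable def condDist {X1 X2 : Type*} [Fintype X1] [Fintype X2]
    (P : X1 × X2 → ℝ) (x2 : X2) (x1 : X1) : ℝ :=
  if (∑ a, P (a, x2)) = 0 then (Fintype.card X1 : ℝ)⁻¹
  else P (x1, x2) / ∑ a, P (a, x2)

/-- Conditional mutual information `I(X1; Y | X2)` of the channel
`W : X1 → X2 → Y → ℝ` under joint input distribution `P` on `X1 × X2`:
`∑_{x2} P_{X2}(x2) · I(P_{X1|X2=x2}, W(·|·,x2))`. -/
noncomputable def condMI {X1 X2 Y : Type*} [Fintype X1] [Fintype X2] [Fintype Y]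
    (P : X1 × X2 → ℝ) (W : X1 → X2 → Y → ℝ) : ℝ :=
  ∑ x2, (∑ a, P (a, x2)) * mutInf (condDist P x2) (fun x1 y => W x1 x2 y)

-- continuous surrogate
noncomputable def mutInfF {X Y : Type*} [Fintype X] [Fintype Y]
    (W : X → Y → ℝ) (P : X → ℝ) : ℝ :=
  (∑ x, ∑ y, P x * W x y * Real.log (W x y)) -
    ∑ y, (∑ x, P x * W x y) * Real.log (∑ x, P x * W x y)

lemma mutInf_eq_F {X Y : Type*} [Fintype X] [Fintype Y]
    (P : X → ℝ) (W : X → Y → ℝ) (hP : IsProb P) (hW : ∀ x y, 0 ≤ W x y) :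
    mutInf P W = mutInfF W P := by
  have key : ∀ x y, P x * W x y * Real.log (W x y / ∑ x', P x' * W x' y)
      = P x * W x y * Real.log (W x y) - P x * W x y * Real.log (∑ x', P x' * W x' y) := by
    intro x y
    by_cases h : P x * W x y = 0
    · simp [h]
    · have hPx : 0 < P x := lt_of_le_of_ne (hP.1 x) (fun e => h (by rw [← e]; ring))
      have hWy : 0 < W x y :=
        lt_of_le_of_ne (hW x y) (fun e => h (by rw [← e]; ring))
      have hden : 0 < ∑ x', P x' * W x' y :=
        lt_of_lt_of_le (mul_pos hPx hWy)
          (Finset.single_le_sum (fun i _ => mul_nonneg (hP.1 i) (hW i y))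
            (Finset.mem_univ x))
      rw [Real.log_div (ne_of_gt hWy) (ne_of_gt hden)]; ring
  unfold mutInf mutInfF
  rw [Finset.sum_congr rfl fun x _ => Finset.sum_congr rfl fun y _ => key x y]
  simp only [Finset.sum_sub_distrib]
  congr 1
  rw [Finset.sum_comm]
  refine Finset.sum_congr rfl fun y _ => ?_
  rw [Finset.sum_mul]

lemma exists_maximizer {X Y : Type*} [Fintype X] [Fintype Y] [Nonempty X]
    (W : X → Y → ℝ) (hW : ∀ x y, 0 ≤ W x y) :
    ∃ Pstar, IsProb Pstar ∧ ∀ Q, IsProb Q → mutInf Q W ≤ mutInf Pstar W := by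
  have hcont : Continuous (mutInfF W) := by
    apply Continuous.sub
    · exact continuous_finset_sum _ fun x _ => continuous_finset_sum _ fun y _ =>
        ((continuous_apply x).mul continuous_const).mul continuous_const
    · exact continuous_finset_sum _ fun y _ =>
        Real.continuous_mul_log.comp
          (continuous_finset_sum _ fun x _ => (continuous_apply x).mul continuous_const)
  have hmem : ∀ p : X → ℝ, p ∈ stdSimplex ℝ X ↔ IsProb p := fun p => Iff.rfl
  have hne : (stdSimplex ℝ X).Nonempty := by
    refine ⟨fun _ => (Fintype.card X : ℝ)⁻¹, fun x => by positivity, ?_⟩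
    have : (0:ℝ) < Fintype.card X := by exact_mod_cast Fintype.card_pos
    simp [Finset.sum_const, mul_inv_cancel₀ (ne_of_gt this)]
  obtain ⟨Pstar, hPs, hmax⟩ :=
    (isCompact_stdSimplex ℝ X).exists_isMaxOn hne hcont.continuousOn
  refine ⟨Pstar, hPs, fun Q hQ => ?_⟩
  rw [mutInf_eq_F Q W hQ hW, mutInf_eq_F Pstar W hPs hW]
  exact hmax hQ

lemma condDist_isProb {X1 X2 : Type*} [Fintype X1] [Fintype X2] [Nonempty X1]
    (P : X1 × X2 → ℝ) (hP : ∀ p, 0 ≤ P p) (x2 : X2) : IsProb (condDist P x2) := by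
  unfold condDist
  by_cases h : (∑ a, P (a, x2)) = 0
  · simp only [h, if_true]
    constructor
    · intro _; positivity
    · have : (0:ℝ) < Fintype.card X1 := by exact_mod_cast Fintype.card_pos
      simp [Finset.sum_const, mul_inv_cancel₀ (ne_of_gt this)]
  · simp only [h, if_false]
    have hpos : 0 < ∑ a, P (a, x2) :=
      lt_of_le_of_ne (Finset.sum_nonneg fun a _ => hP _) (Ne.symm h)
    exact ⟨fun x1 => div_nonneg (hP _) hpos.le, by rw [← Finset.sum_div, div_self h]⟩

/-- Key lemma. -/
lemma key_lemma {X1 X2 Y : Type*} [Fintype X1] [Fintype X2] [Fintype Y]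
    [Nonempty X1] [Nonempty X2]
    (V : X1 → X2 → Y → ℝ) (hV : ∀ x1 x2 y, 0 ≤ V x1 x2 y)
    (hinv : ∀ (P : X1 → ℝ), IsProb P → ∀ x2 x2' : X2,
      mutInf P (fun x1 y => V x1 x2 y) = mutInf P (fun x1 y => V x1 x2' y)) :
    ∃ Pstar : X1 → ℝ, IsProb Pstar ∧ ∀ Qstar : X2 → ℝ, IsProb Qstar →
      ∀ P1 : X1 × X2 → ℝ, IsProb P1 →
        condMI P1 V ≤ condMI (fun p => Pstar p.1 * Qstar p.2) V := by
  obtain ⟨x20⟩ := ‹Nonempty X2›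
  obtain ⟨Pstar, hPs, hmax⟩ := exists_maximizer (fun x1 y => V x1 x20 y) (fun x y => hV x x20 y)
  set M : ℝ := mutInf Pstar (fun x1 y => V x1 x20 y) with hM
  refine ⟨Pstar, hPs, fun Qstar hQs P1 hP1 => ?_⟩
  -- the product side equals M
  have hprod : condMI (fun p => Pstar p.1 * Qstar p.2) V = M := by
    unfold condMI
    have hterm : ∀ x2, (∑ a, Pstar a * Qstar x2) *
        mutInf (condDist (fun p : X1 × X2 => Pstar p.1 * Qstar p.2) x2) (fun x1 y => V x1 x2 y)
        = Qstar x2 * M := by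
      intro x2
      have hmarg : (∑ a, Pstar a * Qstar x2) = Qstar x2 := by
        rw [← Finset.sum_mul, hPs.2, one_mul]
      rw [hmarg]
      by_cases h : Qstar x2 = 0
      · simp [h]
      · have hcd : condDist (fun p : X1 × X2 => Pstar p.1 * Qstar p.2) x2 = Pstar := by
          funext x1
          unfold condDist
          simp only [hmarg, if_neg h]
          rw [mul_div_assoc, div_self h, mul_one]
        rw [hcd, hinv Pstar hPs x2 x20]
    rw [Finset.sum_congr rfl fun x2 _ => hterm x2, ← Finset.sum_mul, hQs.2, one_mul]
  rw [hprod]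
  unfold condMI
  have hbound : ∀ x2, (∑ a, P1 (a, x2)) * mutInf (condDist P1 x2) (fun x1 y => V x1 x2 y)
      ≤ (∑ a, P1 (a, x2)) * M := by
    intro x2
    have hm : 0 ≤ ∑ a, P1 (a, x2) := Finset.sum_nonneg fun a _ => hP1.1 _
    refine mul_le_mul_of_nonneg_left ?_ hm
    have hcd := condDist_isProb P1 hP1.1 x2
    rw [hinv _ hcd x2 x20]
    exact hmax _ hcd
  calc ∑ x2, (∑ a, P1 (a, x2)) * mutInf (condDist P1 x2) (fun x1 y => V x1 x2 y)
      ≤ ∑ x2, (∑ a, P1 (a, x2)) * M := Finset.sum_le_sum fun x2 _ => hbound x2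
    _ = M := by
        rw [← Finset.sum_mul]
        have : (∑ x2, ∑ a, P1 (a, x2)) = 1 := by
          rw [← hP1.2, Finset.sum_comm]
          exact (Fintype.sum_prod_type _).symm
        rw [this, one_mul]

/-- if in both directions the input-output mutual information of the
state-dependent one-way channels does not depend on the state, then there exist
distributions `P*` on `X1` and `Q*` on `X2` such that the product `P* ⊗ Q*`
dominates both conditional mutual informations for every joint input distribution. -/
theorem product_dominance_of_two_sided_invariance
    {X1 X2 Y1 Y2 : Type*} [Fintype X1] [Fintype X2] [Fintype Y1] [Fintype Y2]
    [Nonempty X1] [Nonempty X2]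
    (W : X1 → X2 → Y1 × Y2 → ℝ) (hW : ∀ x1 x2, IsProb (W x1 x2))
    (hinv1 : ∀ (P : X1 → ℝ), IsProb P → ∀ x2 x2' : X2,
      mutInf P (fun x1 y2 => ∑ y1, W x1 x2 (y1, y2)) =
        mutInf P (fun x1 y2 => ∑ y1, W x1 x2' (y1, y2)))
    (hinv2 : ∀ (Q : X2 → ℝ), IsProb Q → ∀ x1 x1' : X1,
      mutInf Q (fun x2 y1 => ∑ y2, W x1 x2 (y1, y2)) =
        mutInf Q (fun x2 y1 => ∑ y2, W x1' x2 (y1, y2))) :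
    ∃ (Pstar : X1 → ℝ) (Qstar : X2 → ℝ), IsProb Pstar ∧ IsProb Qstar ∧
      ∀ (P1 : X1 × X2 → ℝ), IsProb P1 →
        condMI P1 (fun x1 x2 y2 => ∑ y1, W x1 x2 (y1, y2)) ≤
          condMI (fun p => Pstar p.1 * Qstar p.2)
            (fun x1 x2 y2 => ∑ y1, W x1 x2 (y1, y2)) ∧
        condMI (fun p : X2 × X1 => P1 (p.2, p.1))
            (fun x2 x1 y1 => ∑ y2, W x1 x2 (y1, y2)) ≤
          condMI (fun p : X2 × X1 => Pstar p.2 * Qstar p.1)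
            (fun x2 x1 y1 => ∑ y2, W x1 x2 (y1, y2)) := by
  obtain ⟨Pstar, hPs, hkey1⟩ := key_lemma (fun x1 x2 y2 => ∑ y1, W x1 x2 (y1, y2))
    (fun x1 x2 y2 => Finset.sum_nonneg fun y1 _ => (hW x1 x2).1 _)
    (fun P hP x2 x2' => hinv1 P hP x2 x2')
  obtain ⟨Qstar, hQs, hkey2⟩ := key_lemma (fun x2 x1 y1 => ∑ y2, W x1 x2 (y1, y2))
    (fun x2 x1 y1 => Finset.sum_nonneg fun y2 _ => (hW x1 x2).1 _)
    (fun Q hQ x1 x1' => hinv2 Q hQ x1 x1')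
  refine ⟨Pstar, Qstar, hPs, hQs, fun P1 hP1 => ?_⟩
  constructor
  · exact hkey1 Qstar hQs P1 hP1
  · have hswap : IsProb (fun p : X2 × X1 => P1 (p.2, p.1)) := by
      refine ⟨fun p => hP1.1 _, ?_⟩
      rw [Fintype.sum_prod_type, Finset.sum_comm, ← Fintype.sum_prod_type]
      exact hP1.2
    have h := hkey2 Pstar hPs (fun p : X2 × X1 => P1 (p.2, p.1)) hswap
    have heq : (fun p : X2 × X1 => Pstar p.2 * Qstar p.1)
        = (fun p : X2 × X1 => Qstar p.1 * Pstar p.2) := funext fun p => mul_comm _ _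
    rw [heq]
    exact h
end

section
/- (Shannon one-sided symmetry implies the inner-bound-achieving form.) Let X1, X2, Y1, Y2 be finite sets and P_{Y1,Y2|X1,X2} a channel. Suppose for every pair x1', x1'' ∈ X1 there exist bijections π1 on Y1 and π2 on Y2 such that P_{Y1,Y2|X1,X2}(y1,y2|x1,x2) = P_{Y1,Y2|X1,X2}(π1(y1), π2(y2) | τ_{x1',x1''}(x1), x2) for all x1,x2,y1,y2, where τ_{x1',x1''} swaps x1' and x1''. Then for every joint input distribution P on X1 × X2 with X2-marginal P_{X2}, the distribution P' = Unif(X1) ⊗ P_{X2} satisfies I_P(X1; Y2 | X2) ≤ I_{P'}(X1; Y2 | X2) and I_P(X2; Y1 | X1) ≤ I_{P'}(X2; Y1 | X1). -/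
open Finset

section Helpers
variable {X Y : Type*} [Fintype X] [Fintype Y]

lemma mutInf_eq_sub (P : X → ℝ) (W : X → Y → ℝ) (hP : ∀ x, 0 ≤ P x)
    (hW : ∀ x y, 0 ≤ W x y) :
    mutInf P W = (∑ x, ∑ y, P x * W x y * Real.log (W x y))
      - ∑ y, (∑ x, P x * W x y) * Real.log (∑ x, P x * W x y) := by
  have key : ∀ x y, P x * W x y * Real.log (W x y / ∑ x', P x' * W x' y)
      = P x * W x y * Real.log (W x y) - P x * W x y * Real.log (∑ x', P x' * W x' y) := by
    intro x y
    by_cases hPx : P x = 0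
    · simp [hPx]
    by_cases hWxy : W x y = 0
    · simp [hWxy]
    have hq : 0 < ∑ x', P x' * W x' y := by
      have h1 : 0 < P x * W x y :=
        mul_pos (lt_of_le_of_ne (hP x) (Ne.symm hPx)) (lt_of_le_of_ne (hW x y) (Ne.symm hWxy))
      exact lt_of_lt_of_le h1
        (Finset.single_le_sum (fun i _ => mul_nonneg (hP i) (hW i y)) (mem_univ x))
    rw [Real.log_div hWxy (ne_of_gt hq), mul_sub]
  unfold mutInf
  calc ∑ x, ∑ y, P x * W x y * Real.log (W x y / ∑ x', P x' * W x' y)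
      = ∑ x, ∑ y, (P x * W x y * Real.log (W x y)
          - P x * W x y * Real.log (∑ x', P x' * W x' y)) :=
        Finset.sum_congr rfl fun x _ => Finset.sum_congr rfl fun y _ => key x y
    _ = (∑ x, ∑ y, P x * W x y * Real.log (W x y))
        - ∑ x, ∑ y, P x * W x y * Real.log (∑ x', P x' * W x' y) := by
        simp [Finset.sum_sub_distrib]
    _ = _ := by
        congr 1
        rw [Finset.sum_comm]
        exact Finset.sum_congr rfl fun y _ => by rw [Finset.sum_mul]

lemma mutInf_concave {I : Type*} [Fintype I] (w : I → ℝ) (Q : I → X → ℝ) (W : X → Y → ℝ)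
    (hw : ∀ i, 0 ≤ w i) (hw1 : ∑ i, w i = 1)
    (hQ : ∀ i x, 0 ≤ Q i x) (hW : ∀ x y, 0 ≤ W x y) :
    ∑ i, w i * mutInf (Q i) W ≤ mutInf (fun x => ∑ i, w i * Q i x) W := by
  have hmixnn : ∀ x, 0 ≤ ∑ i, w i * Q i x :=
    fun x => Finset.sum_nonneg fun i _ => mul_nonneg (hw i) (hQ i x)
  rw [mutInf_eq_sub _ W hmixnn hW]
  have hre : ∀ i ∈ Finset.univ (α := I), w i * mutInf (Q i) W
      = w i * ((∑ x, ∑ y, Q i x * W x y * Real.log (W x y))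
        - ∑ y, (∑ x, Q i x * W x y) * Real.log (∑ x, Q i x * W x y)) :=
    fun i _ => by rw [mutInf_eq_sub (Q i) W (hQ i) hW]
  rw [Finset.sum_congr rfl hre]
  simp only [mul_sub]
  rw [Finset.sum_sub_distrib]
  apply sub_le_sub
  · apply le_of_eq
    calc ∑ i, w i * ∑ x, ∑ y, Q i x * W x y * Real.log (W x y)
        = ∑ i, ∑ x, ∑ y, w i * (Q i x * W x y * Real.log (W x y)) := by
          simp [Finset.mul_sum]
      _ = ∑ x, ∑ i, ∑ y, w i * (Q i x * W x y * Real.log (W x y)) := Finset.sum_comm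
      _ = ∑ x, ∑ y, ∑ i, w i * (Q i x * W x y * Real.log (W x y)) :=
          Finset.sum_congr rfl fun x _ => Finset.sum_comm
      _ = ∑ x, ∑ y, (∑ i, w i * Q i x) * W x y * Real.log (W x y) := by
          refine Finset.sum_congr rfl fun x _ => Finset.sum_congr rfl fun y _ => ?_
          rw [Finset.sum_mul, Finset.sum_mul]
          exact Finset.sum_congr rfl fun i _ => by ring
  · have hqmix : ∀ y, (∑ x, (∑ i, w i * Q i x) * W x y) = ∑ i, w i * ∑ x, Q i x * W x y := by
      intro y
      calc ∑ x, (∑ i, w i * Q i x) * W x y = ∑ x, ∑ i, w i * (Q i x * W x y) := by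
            refine Finset.sum_congr rfl fun x _ => ?_
            rw [Finset.sum_mul]
            exact Finset.sum_congr rfl fun i _ => by ring
        _ = ∑ i, ∑ x, w i * (Q i x * W x y) := Finset.sum_comm
        _ = ∑ i, w i * ∑ x, Q i x * W x y := by simp [Finset.mul_sum]
    calc ∑ y, (∑ x, (∑ i, w i * Q i x) * W x y) * Real.log (∑ x, (∑ i, w i * Q i x) * W x y)
        = ∑ y, (∑ i, w i * ∑ x, Q i x * W x y) * Real.log (∑ i, w i * ∑ x, Q i x * W x y) := by
          refine Finset.sum_congr rfl fun y _ => ?_; rw [hqmix y]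
      _ ≤ ∑ y, ∑ i, w i * ((∑ x, Q i x * W x y) * Real.log (∑ x, Q i x * W x y)) := by
          refine Finset.sum_le_sum fun y _ => ?_
          have := Real.convexOn_mul_log.map_sum_le (t := Finset.univ) (w := w)
            (p := fun i => ∑ x, Q i x * W x y) (fun i _ => hw i) hw1
            (fun i _ => Set.mem_Ici.2 (Finset.sum_nonneg fun x _ => mul_nonneg (hQ i x) (hW x y)))
          simpa [smul_eq_mul] using this
      _ = ∑ i, w i * ∑ y, (∑ x, Q i x * W x y) * Real.log (∑ x, Q i x * W x y) := by
          rw [Finset.sum_comm]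
          exact Finset.sum_congr rfl fun i _ => by simp [Finset.mul_sum]

lemma mutInf_relabel (Q : X → ℝ) (V V' : X → Y → ℝ) (e : X ≃ X) (π : Y ≃ Y)
    (h : ∀ x y, V x y = V' (e x) (π y)) :
    mutInf (fun x => Q (e x)) V = mutInf Q V' := by
  unfold mutInf
  have hden : ∀ y, (∑ x', Q (e x') * V x' y) = ∑ x', Q x' * V' x' (π y) := by
    intro y
    rw [← Equiv.sum_comp e (fun z => Q z * V' z (π y))]
    exact Finset.sum_congr rfl fun x _ => by rw [h x y]
  calc ∑ x, ∑ y, Q (e x) * V x y * Real.log (V x y / ∑ x', Q (e x') * V x' y)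
      = ∑ x, ∑ y, Q (e x) * V' (e x) (π y)
          * Real.log (V' (e x) (π y) / ∑ x', Q x' * V' x' (π y)) :=
        Finset.sum_congr rfl fun x _ => Finset.sum_congr rfl fun y _ => by rw [h x y, hden y]
    _ = ∑ x, ∑ y, Q x * V' x (π y) * Real.log (V' x (π y) / ∑ x', Q x' * V' x' (π y)) :=
        Equiv.sum_comp e (fun z => ∑ y, Q z * V' z (π y)
          * Real.log (V' z (π y) / ∑ x', Q x' * V' x' (π y)))
    _ = ∑ x, ∑ y, Q x * V' x y * Real.log (V' x y / ∑ x', Q x' * V' x' y) :=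
        Finset.sum_congr rfl fun x _ => Equiv.sum_comp π
          (fun y => Q x * V' x y * Real.log (V' x y / ∑ x', Q x' * V' x' y))

lemma mutInf_perm_inv [DecidableEq X] (V : X → Y → ℝ)
    (hs : ∀ a b : X, ∃ π : Y ≃ Y, ∀ x y, V x y = V (Equiv.swap a b x) (π y))
    (σ : Equiv.Perm X) : ∀ Q : X → ℝ, mutInf (fun x => Q (σ x)) V = mutInf Q V := by
  refine Equiv.Perm.swap_induction_on
    (motive := fun σ => ∀ Q : X → ℝ, mutInf (fun x => Q (σ x)) V = mutInf Q V) σ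
    (fun Q => by simp) ?_
  · intro f a b hab ih Q
    have h1 : (fun x => Q ((Equiv.swap a b * f) x))
        = fun x => (fun z => Q (Equiv.swap a b z)) (f x) := rfl
    rw [h1, ih (fun z => Q (Equiv.swap a b z))]
    obtain ⟨π, hπ⟩ := hs a b
    exact mutInf_relabel Q V V (Equiv.swap a b) π hπ

lemma mutInf_le_uniform [DecidableEq X] [Nonempty X] (Q : X → ℝ) (V : X → Y → ℝ)
    (hQ : ∀ x, 0 ≤ Q x) (hQ1 : ∑ x, Q x = 1) (hV : ∀ x y, 0 ≤ V x y)
    (hs : ∀ a b : X, ∃ π : Y ≃ Y, ∀ x y, V x y = V (Equiv.swap a b x) (π y)) :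
    mutInf Q V ≤ mutInf (fun _ => (Fintype.card X : ℝ)⁻¹) V := by
  have hnpos : 0 < Fintype.card X := Fintype.card_pos
  have hnne : (Fintype.card X : ℝ) ≠ 0 := Nat.cast_ne_zero.2 hnpos.ne'
  have hNne : (Nat.factorial (Fintype.card X) : ℝ) ≠ 0 :=
    Nat.cast_ne_zero.2 (Nat.factorial_pos _).ne'
  have hwsum : ∑ _σ : Equiv.Perm X, ((Nat.factorial (Fintype.card X) : ℝ))⁻¹ = 1 := by
    rw [Finset.sum_const, Finset.card_univ, Fintype.card_perm, nsmul_eq_mul]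
    field_simp
  have hconst : ∀ a b : X,
      (∑ σ : Equiv.Perm X, Q (σ a)) = ∑ σ : Equiv.Perm X, Q (σ b) := by
    intro a b
    calc ∑ σ : Equiv.Perm X, Q (σ a)
        = ∑ σ : Equiv.Perm X, Q ((Equiv.mulRight (Equiv.swap a b) σ) a) :=
          (Equiv.sum_comp (Equiv.mulRight (Equiv.swap a b))
            (fun σ : Equiv.Perm X => Q (σ a))).symm
      _ = ∑ σ : Equiv.Perm X, Q (σ b) := Finset.sum_congr rfl fun σ _ => by
          simp [Equiv.Perm.mul_apply]
  have htot : ∀ a : X,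
      (Fintype.card X : ℝ) * ∑ σ : Equiv.Perm X, Q (σ a)
        = ((Nat.factorial (Fintype.card X) : ℕ) : ℝ) := by
    intro a
    have h3 : ∑ v : X, ∑ σ : Equiv.Perm X, Q (σ v)
        = ((Nat.factorial (Fintype.card X) : ℕ) : ℝ) := by
      rw [Finset.sum_comm]
      calc ∑ σ : Equiv.Perm X, ∑ v, Q (σ v)
          = ∑ _σ : Equiv.Perm X, (1:ℝ) :=
            Finset.sum_congr rfl fun σ _ => by rw [Equiv.sum_comp σ Q, hQ1]
        _ = _ := by rw [Finset.sum_const, Finset.card_univ, Fintype.card_perm]; simp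
    have h2 : ∑ v : X, ∑ σ : Equiv.Perm X, Q (σ v)
        = ∑ _v : X, ∑ σ : Equiv.Perm X, Q (σ a) :=
      Finset.sum_congr rfl fun v _ => hconst v a
    rw [h2, Finset.sum_const, Finset.card_univ, nsmul_eq_mul] at h3
    exact h3
  have hmix : ∀ x, (∑ σ : Equiv.Perm X, ((Nat.factorial (Fintype.card X) : ℝ))⁻¹ * Q (σ x))
      = ((Fintype.card X : ℝ))⁻¹ := by
    intro x
    rw [← Finset.mul_sum]
    have h := htot x
    have hS : ∑ σ : Equiv.Perm X, Q (σ x)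
        = ((Nat.factorial (Fintype.card X) : ℕ) : ℝ) / (Fintype.card X : ℝ) := by
      field_simp at h ⊢; linarith
    rw [hS]
    field_simp
  calc mutInf Q V
      = ∑ σ : Equiv.Perm X, ((Nat.factorial (Fintype.card X) : ℝ))⁻¹
          * mutInf (fun x => Q (σ x)) V := by
        rw [Finset.sum_congr rfl fun (σ : Equiv.Perm X) _ => by
          rw [mutInf_perm_inv V hs σ Q]]
        rw [← Finset.sum_mul, hwsum, one_mul]
    _ ≤ mutInf (fun x => ∑ σ : Equiv.Perm X,
          ((Nat.factorial (Fintype.card X) : ℝ))⁻¹ * Q (σ x)) V :=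
        mutInf_concave _ _ V (fun σ => inv_nonneg.2 (Nat.cast_nonneg _)) hwsum
          (fun σ x => hQ _) hV
    _ = mutInf (fun _ => (Fintype.card X : ℝ)⁻¹) V := by
        congr 1
        exact funext hmix

lemma condDist_nonneg' {X1 X2 : Type*} [Fintype X1] [Fintype X2]
    (P : X1 × X2 → ℝ) (hP : ∀ p, 0 ≤ P p) (x2 : X2) (x1 : X1) :
    0 ≤ condDist P x2 x1 := by
  unfold condDist
  split_ifs with h
  · positivity
  · exact div_nonneg (hP _) (Finset.sum_nonneg fun a _ => hP _)

lemma condDist_sum_one' {X1 X2 : Type*} [Fintype X1] [Fintype X2] [Nonempty X1]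
    (P : X1 × X2 → ℝ) (x2 : X2) :
    ∑ x1, condDist P x2 x1 = 1 := by
  have hnne : (Fintype.card X1 : ℝ) ≠ 0 := Nat.cast_ne_zero.2 Fintype.card_pos.ne'
  unfold condDist
  by_cases h : (∑ a, P (a, x2)) = 0
  · simp only [if_pos h]
    rw [Finset.sum_const, Finset.card_univ, nsmul_eq_mul]
    field_simp
  · simp only [if_neg h]
    rw [← Finset.sum_div, div_self h]

end Helpers

/-- Shannon's one-sided symmetry condition implies that for every
joint input distribution `P`, the product `Unif(X1) ⊗ P_{X2}` dominates both
conditional mutual informations. -/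
theorem shannon_one_sided_symmetry_dominance
    {X1 X2 Y1 Y2 : Type*} [Fintype X1] [Fintype X2] [Fintype Y1] [Fintype Y2]
    [DecidableEq X1]
    (W : X1 → X2 → Y1 × Y2 → ℝ) (hW : ∀ x1 x2, IsProb (W x1 x2))
    (hsym : ∀ x1' x1'' : X1, ∃ (π1 : Y1 ≃ Y1) (π2 : Y2 ≃ Y2),
      ∀ x1 x2 y1 y2,
        W x1 x2 (y1, y2) = W (Equiv.swap x1' x1'' x1) x2 (π1 y1, π2 y2))
    (P : X1 × X2 → ℝ) (hP : IsProb P) :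
    condMI P (fun x1 x2 y2 => ∑ y1, W x1 x2 (y1, y2)) ≤
      condMI (fun p => (Fintype.card X1 : ℝ)⁻¹ * ∑ a, P (a, p.2))
        (fun x1 x2 y2 => ∑ y1, W x1 x2 (y1, y2)) ∧
    condMI (fun p : X2 × X1 => P (p.2, p.1))
        (fun x2 x1 y1 => ∑ y2, W x1 x2 (y1, y2)) ≤
      condMI (fun p : X2 × X1 => (Fintype.card X1 : ℝ)⁻¹ * ∑ a, P (a, p.1))
        (fun x2 x1 y1 => ∑ y2, W x1 x2 (y1, y2)) := by
  obtain ⟨hPnn, hPsum⟩ := hP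
  have hWnn : ∀ x1 x2 p, 0 ≤ W x1 x2 p := fun x1 x2 => (hW x1 x2).1
  by_cases hXe : IsEmpty X1
  · constructor
    · have hm : ∀ (Q : X1 → ℝ) (V : X1 → Y2 → ℝ), mutInf Q V = 0 := by
        intro Q V; unfold mutInf; rw [Finset.univ_eq_empty, Finset.sum_empty]
      simp [condMI, hm]
    · unfold condMI
      rw [Finset.univ_eq_empty, Finset.sum_empty, Finset.sum_empty]
  haveI : Nonempty X1 := not_isEmpty_iff.mp hXe
  have hnne : (Fintype.card X1 : ℝ) ≠ 0 := Nat.cast_ne_zero.2 Fintype.card_pos.ne'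
  have hSum2 : ∑ x2 : X2, ∑ a : X1, P (a, x2) = 1 := by
    rw [Finset.sum_comm, ← Fintype.sum_prod_type]
    exact hPsum
  constructor
  · -- first inequality
    unfold condMI
    refine Finset.sum_le_sum fun x2 _ => ?_
    have hS' : (∑ _a : X1, (Fintype.card X1:ℝ)⁻¹ * ∑ a', P (a', x2)) = ∑ a, P (a, x2) := by
      rw [Finset.sum_const, Finset.card_univ, nsmul_eq_mul, ← mul_assoc,
        mul_inv_cancel₀ hnne, one_mul]
    have hcd : condDist (fun p : X1 × X2 => (Fintype.card X1:ℝ)⁻¹ * ∑ a, P (a, p.2)) x2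
        = fun _ => (Fintype.card X1:ℝ)⁻¹ := by
      funext x1
      unfold condDist
      simp only
      rw [hS']
      by_cases h0 : (∑ a, P (a, x2)) = 0
      · rw [if_pos h0]
      · rw [if_neg h0, mul_div_assoc, div_self h0, mul_one]
    simp only
    rw [hcd, hS']
    have hs2 : ∀ a b : X1, ∃ π : Y2 ≃ Y2, ∀ x1 y2,
        (fun x1 y2 => ∑ y1, W x1 x2 (y1, y2)) x1 y2
          = (fun x1 y2 => ∑ y1, W x1 x2 (y1, y2)) (Equiv.swap a b x1) (π y2) := by
      intro a b
      obtain ⟨π1, π2, hπ⟩ := hsym a b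
      refine ⟨π2, fun x1 y2 => ?_⟩
      simp only
      calc ∑ y1, W x1 x2 (y1, y2)
          = ∑ y1, W (Equiv.swap a b x1) x2 (π1 y1, π2 y2) :=
            Finset.sum_congr rfl fun y1 _ => hπ x1 x2 y1 y2
        _ = ∑ y1, W (Equiv.swap a b x1) x2 (y1, π2 y2) :=
            Equiv.sum_comp π1 (fun y1 => W (Equiv.swap a b x1) x2 (y1, π2 y2))
    exact mul_le_mul_of_nonneg_left
      (mutInf_le_uniform (condDist P x2) _ (condDist_nonneg' P hPnn x2)
        (condDist_sum_one' P x2)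
        (fun x1 y2 => Finset.sum_nonneg fun y1 _ => hWnn _ _ _) hs2)
      (Finset.sum_nonneg fun a _ => hPnn _)
  · -- second inequality
    obtain ⟨x0⟩ := (inferInstance : Nonempty X1)
    unfold condMI
    have hconstV : ∀ (Q : X2 → ℝ) (a : X1),
        mutInf Q (fun x2 y1 => ∑ y2, W a x2 (y1, y2))
          = mutInf Q (fun x2 y1 => ∑ y2, W x0 x2 (y1, y2)) := by
      intro Q a
      obtain ⟨π1, π2, hπ⟩ := hsym a x0
      have h : ∀ x2 y1, (fun x2 y1 => ∑ y2, W a x2 (y1, y2)) x2 y1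
          = (fun x2 y1 => ∑ y2, W x0 x2 (y1, y2)) (Equiv.refl X2 x2) (π1 y1) := by
        intro x2 y1
        simp only [Equiv.refl_apply]
        calc ∑ y2, W a x2 (y1, y2)
            = ∑ y2, W (Equiv.swap a x0 a) x2 (π1 y1, π2 y2) :=
              Finset.sum_congr rfl fun y2 _ => hπ a x2 y1 y2
          _ = ∑ y2, W x0 x2 (π1 y1, y2) := by
              rw [Equiv.swap_apply_left]
              exact Equiv.sum_comp π2 (fun y2 => W x0 x2 (π1 y1, y2))
      exact mutInf_relabel Q _ _ (Equiv.refl X2) π1 h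
    have hwnn : ∀ x1 : X1, 0 ≤ ∑ a : X2, P (x1, a) :=
      fun x1 => Finset.sum_nonneg fun a _ => hPnn _
    have hw1 : ∑ x1 : X1, ∑ a : X2, P (x1, a) = 1 := by
      rw [← Fintype.sum_prod_type]; exact hPsum
    have hPswnn : ∀ p : X2 × X1, 0 ≤ P (p.2, p.1) := fun p => hPnn _
    have hRHS : (∑ x1 : X1, (∑ a : X2, (Fintype.card X1:ℝ)⁻¹ * ∑ a' : X1, P (a', a))
          * mutInf (condDist (fun p : X2 × X1 =>
              (Fintype.card X1:ℝ)⁻¹ * ∑ a' : X1, P (a', p.1)) x1)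
            (fun x2 y1 => ∑ y2, W x1 x2 (y1, y2)))
        = mutInf (fun x2 => ∑ a : X1, P (a, x2))
            (fun x2 y1 => ∑ y2, W x0 x2 (y1, y2)) := by
      have hwt : (∑ a : X2, (Fintype.card X1:ℝ)⁻¹ * ∑ a' : X1, P (a', a))
          = (Fintype.card X1:ℝ)⁻¹ := by
        rw [← Finset.mul_sum, hSum2, mul_one]
      have hcd2 : ∀ x1 : X1, condDist (fun p : X2 × X1 =>
            (Fintype.card X1:ℝ)⁻¹ * ∑ a' : X1, P (a', p.1)) x1
          = fun x2 => ∑ a : X1, P (a, x2) := by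
        intro x1
        funext x2
        unfold condDist
        simp only
        rw [if_neg (by rw [hwt]; exact inv_ne_zero hnne), hwt,
          mul_comm, mul_div_assoc, div_self (inv_ne_zero hnne), mul_one]
      calc ∑ x1 : X1, (∑ a : X2, (Fintype.card X1:ℝ)⁻¹ * ∑ a' : X1, P (a', a))
            * mutInf (condDist (fun p : X2 × X1 =>
                (Fintype.card X1:ℝ)⁻¹ * ∑ a' : X1, P (a', p.1)) x1)
              (fun x2 y1 => ∑ y2, W x1 x2 (y1, y2))
          = ∑ _x1 : X1, (Fintype.card X1:ℝ)⁻¹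
              * mutInf (fun x2 => ∑ a : X1, P (a, x2))
                (fun x2 y1 => ∑ y2, W x0 x2 (y1, y2)) :=
            Finset.sum_congr rfl fun x1 _ => by rw [hwt, hcd2 x1, hconstV]
        _ = _ := by
            rw [Finset.sum_const, Finset.card_univ, nsmul_eq_mul, ← mul_assoc,
              mul_inv_cancel₀ hnne, one_mul]
    calc ∑ x1 : X1, (∑ a : X2, P (x1, a))
          * mutInf (condDist (fun p : X2 × X1 => P (p.2, p.1)) x1)
            (fun x2 y1 => ∑ y2, W x1 x2 (y1, y2))
        = ∑ x1 : X1, (∑ a : X2, P (x1, a))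
          * mutInf (condDist (fun p : X2 × X1 => P (p.2, p.1)) x1)
            (fun x2 y1 => ∑ y2, W x0 x2 (y1, y2)) :=
          Finset.sum_congr rfl fun x1 _ => by rw [hconstV]
      _ ≤ mutInf (fun x2 => ∑ x1 : X1, (∑ a : X2, P (x1, a))
            * condDist (fun p : X2 × X1 => P (p.2, p.1)) x1 x2)
          (fun x2 y1 => ∑ y2, W x0 x2 (y1, y2)) :=
          mutInf_concave _ _ _ hwnn hw1
            (fun x1 x2 => condDist_nonneg' _ hPswnn x1 x2)
            (fun x2 y1 => Finset.sum_nonneg fun y2 _ => hWnn _ _ _)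
      _ = mutInf (fun x2 => ∑ a : X1, P (a, x2))
            (fun x2 y1 => ∑ y2, W x0 x2 (y1, y2)) := by
          congr 1
          funext x2
          refine Finset.sum_congr rfl fun x1 _ => ?_
          unfold condDist
          simp only
          by_cases h0 : (∑ a : X2, P (x1, a)) = 0
          · rw [if_pos h0, h0, zero_mul]
            exact ((Finset.sum_eq_zero_iff_of_nonneg
              (fun a _ => hPnn (x1, a))).1 h0 x2 (Finset.mem_univ x2)).symm
          · rw [if_neg h0, mul_comm, div_mul_cancel₀ _ h0]
      _ = _ := hRHS.symm
end
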